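/- Let γ ∈ ℝ, ω ∈ ℂ with ω ≠ 0, δ ∈ ℂ with δ ≠ 0, s, ℓ ∈ ℝ, and ν ∈ ℂ with ν ≠ 0 and ν² = γ² − ω². For a, b ∈ ℂ set Ψ(a, b) = (a·cos(ωs) + b·sin(ωs))/ν. Define the gauge interior propagation matrix Q = e^{−γℓ}·G₋·Mₕ·G₊, where G₋ has rows [1,0],[−γ,1], G₊ has rows [1,0],[γ,1], and Mₕ has rows [cosh(νℓ), sinh(νℓ)/ν] and [ν·sinh(νℓ), cosh(νℓ)]. Then the one-block gauge propagation matrix P = P_int(ω, 1, s)·D(δ)⁻¹·Q·D(δ) equals e^{−γℓ} times the 2×2 matrix with entries: (1,1) = cos(ωs)·cosh(νℓ) − Ψ(−γ, ω/δ)·sinh(νℓ); (1,2) = (1/ω)·cosh(νℓ)·sin(ωs) − (δ/ω)·Ψ(−ω, γ/δ)·sinh(νℓ); (2,1) = −ω·cosh(νℓ)·sin(ωs) − (ω/δ)·Ψ(ω, δγ)·sinh(νℓ); (2,2) = cos(ωs)·cosh(νℓ) − δ·Ψ(γ/δ, ω)·sinh(νℓ); moreover det(P) = e^{−2γℓ},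 and in particular the symmetrised propagation matrix e^{γℓ}·P has determinant 1. -/

import Mathlib

open Complex Matrix
set_option maxHeartbeats 1600000

/-- The interior propagation matrix `P_int(ω, v, ℓ)`. -/
noncomputable def Pint (ω v : ℂ) (ℓ : ℝ) : Matrix (Fin 2) (Fin 2) ℂ :=
  !![Complex.cos (ω * ℓ / v), (v / ω) * Complex.sin (ω * ℓ / v);
     -(ω / v) * Complex.sin (ω * ℓ / v), Complex.cos (ω * ℓ / v)]

/-- The diagonal matrix `D(δ) = diag(1, δ)`. -/
noncomputable def Dmat (δ : ℂ) : Matrix (Fin 2) (Fin 2) ℂ := !![1, 0; 0, δ]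

/-- `Ψ(a,b) = (a cos(ωs) + b sin(ωs))/ν`. -/
noncomputable def Psi (ω ν : ℂ) (s : ℝ) (a b : ℂ) : ℂ :=
  (a * Complex.cos (ω * s) + b * Complex.sin (ω * s)) / ν

/-- The gauge interior propagation matrix `Q = e^{−γℓ} G₋ Mₕ G₊`. -/
noncomputable def Qgauge (γ : ℝ) (ν : ℂ) (ℓ : ℝ) : Matrix (Fin 2) (Fin 2) ℂ :=
  Complex.exp (-(γ : ℂ) * (ℓ : ℂ)) •
    (!![1, 0; -(γ : ℂ), 1] *
     !![Complex.cosh (ν * ℓ), Complex.sinh (ν * ℓ) / ν;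
        ν * Complex.sinh (ν * ℓ), Complex.cosh (ν * ℓ)] *
     !![1, 0; (γ : ℂ), 1])

/-- Explicit form of the one-block gauge propagation matrix
`P = P_int(ω,1,s)·D(δ)⁻¹·Q·D(δ)`, together with `det P = e^{−2γℓ}` and the fact that the
symmetrised propagation matrix `e^{γℓ}P` has determinant one. -/
theorem stmt_11 (γ : ℝ) (ω δ ν : ℂ) (hω : ω ≠ 0) (hδ : δ ≠ 0) (hν : ν ≠ 0)
    (hν2 : ν ^ 2 = (γ : ℂ) ^ 2 - ω ^ 2) (s ℓ : ℝ) :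
    Pint ω 1 s * (Dmat δ)⁻¹ * Qgauge γ ν ℓ * Dmat δ =
      Complex.exp (-(γ : ℂ) * (ℓ : ℂ)) •
        !![Complex.cos (ω * s) * Complex.cosh (ν * ℓ)
             - Psi ω ν s (-(γ : ℂ)) (ω / δ) * Complex.sinh (ν * ℓ),
           (1 / ω) * Complex.cosh (ν * ℓ) * Complex.sin (ω * s)
             - (δ / ω) * Psi ω ν s (-ω) ((γ : ℂ) / δ) * Complex.sinh (ν * ℓ);
           -ω * Complex.cosh (ν * ℓ) * Complex.sin (ω * s)
             - (ω / δ) * Psi ω ν s ω (δ * (γ : ℂ)) * Complex.sinh (ν * ℓ),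
           Complex.cos (ω * s) * Complex.cosh (ν * ℓ)
             - δ * Psi ω ν s ((γ : ℂ) / δ) ω * Complex.sinh (ν * ℓ)] ∧
    (Pint ω 1 s * (Dmat δ)⁻¹ * Qgauge γ ν ℓ * Dmat δ).det =
      Complex.exp (-2 * (γ : ℂ) * (ℓ : ℂ)) ∧
    (Complex.exp ((γ : ℂ) * (ℓ : ℂ)) •
      (Pint ω 1 s * (Dmat δ)⁻¹ * Qgauge γ ν ℓ * Dmat δ)).det = 1 := by

  have hDinv : (Dmat δ)⁻¹ = !![1, 0; 0, δ⁻¹] := by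
    apply inv_eq_right_inv
    rw [Dmat, Matrix.mul_fin_two, Matrix.one_fin_two]
    simp [mul_inv_cancel₀ hδ]
  set C := Complex.cosh (ν * ℓ) with hC
  set S := Complex.sinh (ν * ℓ) with hS
  set c := Complex.exp (-(γ : ℂ) * (ℓ : ℂ)) with hc
  have hQ : Qgauge γ ν ℓ =
      c • !![C + (γ : ℂ) * S / ν, S / ν; -(ω ^ 2 / ν) * S, C - (γ : ℂ) * S / ν] := by
    rw [Qgauge, Matrix.mul_fin_two, Matrix.mul_fin_two]
    congr 1
    ext i j
    fin_cases i <;> fin_cases j <;>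
        simp only [Matrix.cons_val', Matrix.cons_val_zero, Matrix.cons_val_one,
          Matrix.head_cons, Matrix.head_fin_const, Matrix.empty_val',
          Matrix.cons_val_fin_one, Fin.isValue, Matrix.of_apply, Fin.zero_eta, Fin.mk_one]
    · ring
    · ring
    · field_simp
      linear_combination S * hν2
    · ring
  have hmat : Pint ω 1 s * (Dmat δ)⁻¹ * Qgauge γ ν ℓ * Dmat δ =
      c • !![Complex.cos (ω * s) * C - Psi ω ν s (-(γ : ℂ)) (ω / δ) * S,
           (1 / ω) * C * Complex.sin (ω * s)
             - (δ / ω) * Psi ω ν s (-ω) ((γ : ℂ) / δ) * S;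
           -ω * C * Complex.sin (ω * s) - (ω / δ) * Psi ω ν s ω (δ * (γ : ℂ)) * S,
           Complex.cos (ω * s) * C - δ * Psi ω ν s ((γ : ℂ) / δ) ω * S] := by
    rw [hDinv, hQ, mul_smul_comm, smul_mul_assoc]
    congr 1
    rw [Pint, Dmat, Psi, Psi, Psi, Psi, Matrix.mul_fin_two, Matrix.mul_fin_two,
      Matrix.mul_fin_two]
    ext i j
    fin_cases i <;> fin_cases j <;>
        simp only [Matrix.cons_val', Matrix.cons_val_zero, Matrix.cons_val_one,
          Matrix.head_cons, Matrix.head_fin_const, Matrix.empty_val',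
          Matrix.cons_val_fin_one, Fin.isValue, Matrix.of_apply, Fin.zero_eta, Fin.mk_one] <;>
      · field_simp
        ring
  have hcosh : C ^ 2 - S ^ 2 = 1 := Complex.cosh_sq_sub_sinh_sq _
  have hc2 : c * c = Complex.exp (-2 * (γ : ℂ) * (ℓ : ℂ)) := by
    rw [hc, ← Complex.exp_add]; ring_nf
  have hdetQ : (Qgauge γ ν ℓ).det = c * c := by
    rw [hQ, Matrix.det_smul, Matrix.det_fin_two_of, Fintype.card_fin]
    have h1 : (C + (γ : ℂ) * S / ν) * (C - (γ : ℂ) * S / ν) -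
        S / ν * (-(ω ^ 2 / ν) * S) = 1 := by
      field_simp
      linear_combination ν ^ 2 * hcosh + S ^ 2 * hν2
    rw [h1]; ring
  have hP : (Pint ω 1 s).det = 1 := by
    rw [Pint, Matrix.det_fin_two_of]
    field_simp
    linear_combination Complex.sin_sq_add_cos_sq (ω * s)
  have hdet : (Pint ω 1 s * (Dmat δ)⁻¹ * Qgauge γ ν ℓ * Dmat δ).det =
      Complex.exp (-2 * (γ : ℂ) * (ℓ : ℂ)) := by
    rw [Matrix.det_mul, Matrix.det_mul, Matrix.det_mul, hdetQ, hDinv, hP, ← hc2,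
      Dmat, Matrix.det_fin_two_of, Matrix.det_fin_two_of]
    field_simp
    ring
  refine ⟨hmat, hdet, ?_⟩
  rw [Matrix.det_smul, hdet, Fintype.card_fin]
  rw [← Complex.exp_nat_mul, ← Complex.exp_add]
  rw [show (2 : ℕ) * ((γ : ℂ) * (ℓ : ℂ)) + -2 * (γ : ℂ) * (ℓ : ℂ) = 0 by push_cast; ring]
  exact Complex.exp_zero
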